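/- Let A be an m×n real matrix with columns F₁, …, Fₙ, let S = {1, …, t} with 2 ≤ t ≤ n, and suppose c₁, …, c_t are nonzero reals with Σ_{i=1}^{t} c_i F_i = 0. Assume (1) every proper subset of {F₁, …, F_t} is linearly independent, and (2) the span of {F₁, …, F_t} intersects the span of the remaining columns {F_i : i > t} only in the zero vector. Then for any two vectors x̃, ỹ ∈ ℝⁿ with A x̃ = A ỹ, the vector (x̃₁ − ỹ₁, …, x̃_t − ỹ_t) ∈ ℝᵗ is a scalar multiple of (c₁, …, c_t). -/
import Mathlib


open Matrix

noncomputable def enorm {k : ℕ} (x : Fin k → ℝ) : ℝ :=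
  ‖(EuclideanSpace.equiv (Fin k) ℝ).symm x‖

/-- Dependence among the first t columns is recovered from any two solutions of Axt = Ayt. -/
theorem stmt_15 (m n t : ℕ) (ht2 : 2 ≤ t) (htn : t ≤ n)
    (A : Matrix (Fin m) (Fin n) ℝ) (c : Fin t → ℝ) (hc : ∀ i : Fin t, c i ≠ 0)
    (hrel : ∑ i : Fin t, c i • Aᵀ (Fin.castLE htn i) = 0)
    (hproper : ∀ s : Finset (Fin t), s ≠ Finset.univ →
      LinearIndependent ℝ (fun i : {x : Fin t // x ∈ s} => Aᵀ (Fin.castLE htn i)))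
    (hind : Submodule.span ℝ ((fun i : Fin t => Aᵀ (Fin.castLE htn i)) '' Set.univ) ⊓
        Submodule.span ℝ ((fun j : Fin n => Aᵀ j) '' {j | t ≤ (j : ℕ)}) = ⊥) :
    ∀ xt yt : Fin n → ℝ, A.mulVec xt = A.mulVec yt →
      ∃ a : ℝ, ∀ i : Fin t,
        xt (Fin.castLE htn i) - yt (Fin.castLE htn i) = a * c i := by
  intro xt yt hxy
  set d : Fin n → ℝ := fun j => xt j - yt j with hd
  have h0 : ∑ j : Fin n, d j • Aᵀ j = 0 := by
    funext i
    have h := congrFun hxy i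
    simp only [Matrix.mulVec, dotProduct] at h
    simp only [Finset.sum_apply, Pi.smul_apply, Pi.zero_apply, Matrix.transpose_apply,
      smul_eq_mul, hd, sub_mul]
    rw [Finset.sum_sub_distrib]
    simp only [mul_comm]
    rw [h]; ring
  -- split the sum
  have hsplit : (∑ j ∈ Finset.univ.filter (fun j : Fin n => (j : ℕ) < t), d j • Aᵀ j)
      + ∑ j ∈ Finset.univ.filter (fun j : Fin n => ¬ (j : ℕ) < t), d j • Aᵀ j = 0 := by
    rw [Finset.sum_filter_add_sum_filter_not]; exact h0
  have hmap : Finset.univ.filter (fun j : Fin n => (j : ℕ) < t)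
      = Finset.univ.map (Fin.castLEEmb htn) := by
    ext j
    simp only [Finset.mem_filter, Finset.mem_univ, true_and, Finset.mem_map,
      Fin.castLEEmb_apply]
    constructor
    · intro hj; exact ⟨⟨j, hj⟩, by ext; simp⟩
    · rintro ⟨i, rfl⟩; exact i.isLt
  have hsum1 : (∑ j ∈ Finset.univ.filter (fun j : Fin n => (j : ℕ) < t), d j • Aᵀ j)
      = ∑ i : Fin t, d (Fin.castLE htn i) • Aᵀ (Fin.castLE htn i) := by
    rw [hmap, Finset.sum_map]; rfl
  set v : Fin m → ℝ := ∑ i : Fin t, d (Fin.castLE htn i) • Aᵀ (Fin.castLE htn i) with hv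
  have hv1 : v ∈ Submodule.span ℝ ((fun i : Fin t => Aᵀ (Fin.castLE htn i)) '' Set.univ) := by
    apply Submodule.sum_mem
    intro i _
    exact Submodule.smul_mem _ _ (Submodule.subset_span ⟨i, trivial, rfl⟩)
  have hv2 : v ∈ Submodule.span ℝ ((fun j : Fin n => Aᵀ j) '' {j | t ≤ (j : ℕ)}) := by
    have : v = -(∑ j ∈ Finset.univ.filter (fun j : Fin n => ¬ (j : ℕ) < t), d j • Aᵀ j) := by
      rw [← hsum1]; linear_combination hsplit
    rw [this]
    apply Submodule.neg_mem
    apply Submodule.sum_mem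
    intro j hj
    simp only [Finset.mem_filter, not_lt] at hj
    exact Submodule.smul_mem _ _ (Submodule.subset_span ⟨j, hj.2, rfl⟩)
  have hv0 : v = 0 := by
    have := hind ▸ (Submodule.mem_inf.mpr ⟨hv1, hv2⟩)
    simpa using this
  -- now the combination among first t columns vanishes
  have hz : Fin t := ⟨0, by omega⟩
  set a : ℝ := d (Fin.castLE htn hz) / c hz with ha
  set e : Fin t → ℝ := fun i => d (Fin.castLE htn i) - a * c i with he
  have hez : e hz = 0 := by
    simp [he, ha, div_mul_cancel₀ _ (hc hz)]
  have hesum : ∑ i : Fin t, e i • Aᵀ (Fin.castLE htn i) = 0 := by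
    have : ∑ i : Fin t, e i • Aᵀ (Fin.castLE htn i)
        = v - a • ∑ i : Fin t, c i • Aᵀ (Fin.castLE htn i) := by
      rw [hv, Finset.smul_sum, ← Finset.sum_sub_distrib]
      congr 1; funext i
      simp [he, sub_smul, smul_smul]
    rw [this, hv0, hrel, smul_zero, sub_zero]
  set s : Finset (Fin t) := Finset.univ.erase hz with hs
  have hsne : s ≠ Finset.univ := by
    intro h
    have : hz ∈ s := h ▸ Finset.mem_univ hz
    simp [hs] at this
  have hli := hproper s hsne
  have hsum2 : ∑ i ∈ s, e i • Aᵀ (Fin.castLE htn i) = 0 := by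
    have h := Finset.sum_erase_add Finset.univ (fun i => e i • Aᵀ (Fin.castLE htn i))
      (Finset.mem_univ hz)
    rw [hesum] at h
    simp only [hez, zero_smul, add_zero] at h
    exact h
  have hsum3 : ∑ i : {x : Fin t // x ∈ s}, e i • Aᵀ (Fin.castLE htn (i : Fin t)) = 0 := by
    rw [← hsum2]
    exact (Finset.sum_attach s fun i => e i • Aᵀ (Fin.castLE htn i))
  have hezero : ∀ i : Fin t, e i = 0 := by
    intro i
    by_cases hi : i = hz
    · rw [hi]; exact hez
    · have hi' : i ∈ s := Finset.mem_erase.mpr ⟨hi, Finset.mem_univ i⟩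
      have := Fintype.linearIndependent_iff.mp hli (fun j => e j) hsum3 ⟨i, hi'⟩
      exact this
  refine ⟨a, fun i => ?_⟩
  have := hezero i
  simp only [he] at this
  have : d (Fin.castLE htn i) = a * c i := by linarith
  simpa [hd] using this
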